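/- For real s, t with |s| + |t| < 2, the Hessian of ent(s,t) is negative definite: ent_ss < 0, ent_tt < 0, and ent_ss·ent_tt - ent_st^2 > 0. Consequently ent is strictly concave on the open region |s|+|t| < 2. -/

import Mathlib

open MeasureTheory Set intervalIntegral


open Real

/-- The asymptotic probability `p_a` of an `a`-edge, for tilt `(s, t)`. -/
noncomputable def pA (s t : ℝ) : ℝ :=
  t / 4 + (1 / (2 * π)) * arccos ((cos (π * t / 2) - cos (π * s / 2)) / 2)

/-- The asymptotic probability `p_b` of a `b`-edge, for tilt `(s, t)`. -/
noncomputable def pB (s t : ℝ) : ℝ :=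
  -t / 4 + (1 / (2 * π)) * arccos ((cos (π * t / 2) - cos (π * s / 2)) / 2)

/-- The asymptotic probability `p_c` of a `c`-edge, for tilt `(s, t)`. -/
noncomputable def pC (s t : ℝ) : ℝ :=
  -s / 4 + (1 / (2 * π)) * arccos ((cos (π * s / 2) - cos (π * t / 2)) / 2)

/-- The asymptotic probability `p_d` of a `d`-edge, for tilt `(s, t)`. -/
noncomputable def pD (s t : ℝ) : ℝ :=
  s / 4 + (1 / (2 * π)) * arccos ((cos (π * s / 2) - cos (π * t / 2)) / 2)

/-- The Lobachevsky function `L(z) = -∫₀^z log|2 sin u| du`. -/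
noncomputable def Lob (z : ℝ) : ℝ := -∫ u in (0 : ℝ)..z, Real.log |2 * Real.sin u|

/-- The local entropy as a function of the tilt `(s, t)`:
`ent(s,t) = (1/π)(L(πp_a) + L(πp_b) + L(πp_c) + L(πp_d))`. -/
noncomputable def ent (s t : ℝ) : ℝ :=
  (1 / π) * (Lob (π * pA s t) + Lob (π * pB s t) +
    Lob (π * pC s t) + Lob (π * pD s t))



lemma cont_log2sin : Continuous (fun u : ℝ => |2 * Real.sin u|) :=
  continuous_abs.comp (continuous_const.mul Real.continuous_sin)

lemma integrableOn_log_Ioo {z : ℝ} (hz : 0 < z) :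
    IntegrableOn Real.log (Ioo 0 z) := by
  have h1 : IntegrableOn (fun x : ℝ => Real.log z - Real.log x) (Ioc 0 z) := by
    refine intervalIntegral.integrableOn_deriv_of_nonneg
      (g := fun x : ℝ => x * Real.log z - (x * Real.log x - x))
      (g' := fun x : ℝ => Real.log z - Real.log x) ?_ ?_ ?_
    · exact ((continuous_id.mul continuous_const).sub
        (Real.continuous_mul_log.sub continuous_id)).continuousOn
    · intro x hx
      have hx0 : x ≠ 0 := ne_of_gt hx.1
      have h := ((hasDerivAt_id x).mul_const (Real.log z)).sub
        ((Real.hasDerivAt_mul_log hx0).sub (hasDerivAt_id x))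
      refine h.congr_deriv ?_
      ring
    · intro x hx
      have := Real.log_le_log hx.1 (le_of_lt hx.2)
      linarith
  have h1' : IntegrableOn (fun x : ℝ => Real.log z - Real.log x) (Ioo 0 z) :=
    h1.mono_set Ioo_subset_Ioc_self
  have h2 : IntegrableOn (fun _ : ℝ => Real.log z) (Ioo 0 z) :=
    integrableOn_const measure_Ioo_lt_top.ne
  have h3 := h2.sub h1'
  apply h3.congr
  filter_upwards with x
  simp

lemma intervalIntegrable_log2sin {z : ℝ} (h0 : 0 < z) (hπ : z < π) :
    IntervalIntegrable (fun u => Real.log |2 * Real.sin u|) volume 0 z := by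
  rw [intervalIntegrable_iff_integrableOn_Ioc_of_le h0.le]
  set m := min z (π / 2) with hm
  have hm0 : 0 < m := lt_min h0 (by positivity)
  have hmz : m ≤ z := min_le_left _ _
  have hunion : Ioc 0 m ∪ Ioc m z = Ioc 0 z := Ioc_union_Ioc_eq_Ioc hm0.le hmz
  rw [← hunion]
  apply IntegrableOn.union
  · -- near 0 : compare with |log| + const
    have hmeas : AEStronglyMeasurable (fun u => Real.log |2 * Real.sin u|)
        (volume.restrict (Ioc 0 m)) :=
      (Real.measurable_log.comp cont_log2sin.measurable).aestronglyMeasurable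
    have hbound : ∀ u ∈ Ioc (0:ℝ) m, ‖Real.log |2 * Real.sin u|‖ ≤ |Real.log u| + Real.log π := by
      intro u hu
      have hu0 : 0 < u := hu.1
      have huh : u ≤ π / 2 := hu.2.trans (min_le_right _ _)
      have hsl : 2 / π * u ≤ Real.sin u := Real.mul_le_sin hu0.le huh
      have hsu : Real.sin u ≤ u := (Real.sin_lt hu0).le
      have hs0 : 0 < Real.sin u := lt_of_lt_of_le (by positivity) hsl
      have habs : |2 * Real.sin u| = 2 * Real.sin u := abs_of_pos (by linarith)
      rw [habs]
      have hπ0 : (0:ℝ) < π := Real.pi_pos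
      have hlow : Real.log (4 / π) + Real.log u ≤ Real.log (2 * Real.sin u) := by
        rw [← Real.log_mul (by positivity) hu0.ne']
        apply Real.log_le_log (by positivity)
        have h4 : 4 / π * u = 2 * (2 / π * u) := by ring
        rw [h4]
        linarith
      have hhigh : Real.log (2 * Real.sin u) ≤ Real.log 2 + Real.log u := by
        rw [← Real.log_mul (by norm_num) hu0.ne']
        exact Real.log_le_log (by positivity) (by linarith)
      rw [Real.norm_eq_abs, abs_le]
      constructor
      · have h4 : Real.log (4 / π) ≥ -Real.log π := by
          rw [Real.log_div (by norm_num) Real.pi_ne_zero]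
          have : (0:ℝ) ≤ Real.log 4 := Real.log_nonneg (by norm_num)
          linarith
        have := neg_abs_le (Real.log u)
        linarith
      · have h2 : Real.log 2 ≤ Real.log π := Real.log_le_log (by norm_num)
          (by linarith [Real.pi_gt_three])
        have := le_abs_self (Real.log u)
        linarith
    refine Integrable.mono' (g := fun u => |Real.log u| + Real.log π) ?_ hmeas ?_
    · refine Integrable.add ?_ (integrableOn_const measure_Ioc_lt_top.ne)
      exact ((integrableOn_Ioc_iff_integrableOn_Ioo (f := Real.log) (b := m)).2
        (integrableOn_log_Ioo hm0)).abs
    · exact (ae_restrict_iff' measurableSet_Ioc).2 (Filter.Eventually.of_forall hbound)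
  · -- away from 0 : continuous
    refine (ContinuousOn.integrableOn_Icc ?_).mono_set Ioc_subset_Icc_self
    intro u hu
    have hs : 0 < Real.sin u :=
      Real.sin_pos_of_pos_of_lt_pi (lt_of_lt_of_le hm0 hu.1) (lt_of_le_of_lt hu.2 hπ)
    have : |2 * Real.sin u| ≠ 0 := by
      rw [abs_of_pos (by linarith : (0:ℝ) < 2 * Real.sin u)]; positivity
    exact (ContinuousAt.comp (g := Real.log) (f := fun u : ℝ => |2 * Real.sin u|)
      (Real.continuousAt_log this) cont_log2sin.continuousAt).continuousWithinAt

lemma lob_hasDerivAt {z : ℝ} (h0 : 0 < z) (hπ : z < π) :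
    HasDerivAt Lob (-Real.log (2 * Real.sin z)) z := by
  have hs : 0 < Real.sin z := Real.sin_pos_of_pos_of_lt_pi h0 hπ
  have hint := intervalIntegrable_log2sin h0 hπ
  have hmeas : StronglyMeasurableAtFilter (fun u => Real.log |2 * Real.sin u|) (nhds z) volume :=
    ⟨univ, Filter.univ_mem,
      ((Real.measurable_log.comp cont_log2sin.measurable).aestronglyMeasurable).restrict⟩
  have hcont : ContinuousAt (fun u => Real.log |2 * Real.sin u|) z := by
    have hne : |2 * Real.sin z| ≠ 0 := by
      rw [abs_of_pos (by linarith : (0:ℝ) < 2 * Real.sin z)]; positivity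
    exact ContinuousAt.comp (g := Real.log) (f := fun u : ℝ => |2 * Real.sin u|)
      (Real.continuousAt_log hne) cont_log2sin.continuousAt
  have h := (intervalIntegral.integral_hasDerivAt_right hint hmeas hcont).neg
  have he : Real.log |2 * Real.sin z| = Real.log (2 * Real.sin z) := by
    rw [abs_of_pos (by linarith : (0:ℝ) < 2 * Real.sin z)]
  rw [he] at h
  exact h

noncomputable def Xst (s t : ℝ) : ℝ := (Real.cos (π * t / 2) - Real.cos (π * s / 2)) / 2
noncomputable def Dp (s t : ℝ) : ℝ := Real.cos (π * s / 2) + Real.cos (π * t / 2)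
noncomputable def Qst (s t : ℝ) : ℝ := Real.sqrt (1 - Xst s t ^ 2)

section facts
variable {s t : ℝ}

lemma habs_ab (h : |s| + |t| < 2) : |π * s / 2| + |π * t / 2| < π := by
  have hπ : (0:ℝ) < π := Real.pi_pos
  have h1 : |π * s / 2| = π / 2 * |s| := by
    rw [abs_div, abs_mul, abs_of_pos hπ, abs_of_pos (by norm_num : (0:ℝ) < 2)]; ring
  have h2 : |π * t / 2| = π / 2 * |t| := by
    rw [abs_div, abs_mul, abs_of_pos hπ, abs_of_pos (by norm_num : (0:ℝ) < 2)]; ring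
  rw [h1, h2]; nlinarith [abs_nonneg s, abs_nonneg t]

lemma hDp_pos (h : |s| + |t| < 2) : 0 < Dp s t := by
  have hab := habs_ab h
  have hπ : (0:ℝ) < π := Real.pi_pos
  rw [Dp, Real.cos_add_cos]
  have h1 : |(π * s / 2 + π * t / 2) / 2| < π / 2 := by
    rw [abs_div, abs_of_pos (by norm_num : (0:ℝ) < 2)]
    have := abs_add_le (π * s / 2) (π * t / 2)
    linarith
  have h2 : |(π * s / 2 - π * t / 2) / 2| < π / 2 := by
    rw [abs_div, abs_of_pos (by norm_num : (0:ℝ) < 2)]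
    have := abs_sub (π * s / 2) (π * t / 2)
    linarith
  have c1 := Real.cos_pos_of_mem_Ioo (Set.mem_Ioo.2 ⟨(abs_lt.1 h1).1, (abs_lt.1 h1).2⟩)
  have c2 := Real.cos_pos_of_mem_Ioo (Set.mem_Ioo.2 ⟨(abs_lt.1 h2).1, (abs_lt.1 h2).2⟩)
  positivity

lemma cos_gt_neg_one {x : ℝ} (hx : |x| < π) : -1 < Real.cos x := by
  have h1 : Real.cos π < Real.cos |x| := by
    rcases eq_or_lt_of_le (abs_nonneg x) with h | h
    · rw [← h]; norm_num
    · exact Real.cos_lt_cos_of_nonneg_of_le_pi (abs_nonneg x) le_rfl hx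
  rw [Real.cos_pi, Real.cos_abs] at h1
  exact h1

lemma hX_mem (h : |s| + |t| < 2) : -1 < Xst s t ∧ Xst s t < 1 := by
  have hab := habs_ab h
  have ha : |π * s / 2| < π := by have := abs_nonneg (π * t / 2); linarith
  have hb : |π * t / 2| < π := by have := abs_nonneg (π * s / 2); linarith
  have h1 := cos_gt_neg_one ha
  have h2 := cos_gt_neg_one hb
  have h3 := Real.cos_le_one (π * s / 2)
  have h4 := Real.cos_le_one (π * t / 2)
  constructor <;> rw [Xst] <;> linarith

lemma hQ_pos (h : |s| + |t| < 2) : 0 < Qst s t := by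
  obtain ⟨h1, h2⟩ := hX_mem h
  rw [Qst]
  apply Real.sqrt_pos.2
  nlinarith

lemma hQ_sq (h : |s| + |t| < 2) : Qst s t ^ 2 = 1 - Xst s t ^ 2 := by
  obtain ⟨h1, h2⟩ := hX_mem h
  rw [Qst, Real.sq_sqrt (by nlinarith)]

lemma cos_arccos_X (h : |s| + |t| < 2) : Real.cos (Real.arccos (Xst s t)) = Xst s t :=
  Real.cos_arccos (hX_mem h).1.le (hX_mem h).2.le

lemma sin_arccos_X (h : |s| + |t| < 2) : Real.sin (Real.arccos (Xst s t)) = Qst s t :=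
  Real.sin_arccos _

lemma arccos_X_mem (h : |s| + |t| < 2) :
    0 < Real.arccos (Xst s t) ∧ Real.arccos (Xst s t) < π := by
  obtain ⟨h1, h2⟩ := hX_mem h
  refine ⟨Real.arccos_pos.2 h2, ?_⟩
  have := Real.arccos_pos.2 (show -Xst s t < 1 by linarith)
  rw [Real.arccos_neg] at this
  linarith

lemma pi_pA (s t : ℝ) : π * pA s t = π * t / 4 + Real.arccos (Xst s t) / 2 := by
  rw [pA, Xst]; field_simp

lemma pi_pB (s t : ℝ) : π * pB s t = -(π * t) / 4 + Real.arccos (Xst s t) / 2 := by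
  rw [pB, Xst]; field_simp

lemma pi_pC (s t : ℝ) : π * pC s t = -(π * s) / 4 + (π - Real.arccos (Xst s t)) / 2 := by
  rw [pC, Xst]
  have : (Real.cos (π * s / 2) - Real.cos (π * t / 2)) / 2
      = -((Real.cos (π * t / 2) - Real.cos (π * s / 2)) / 2) := by ring
  rw [this, Real.arccos_neg]
  field_simp

lemma pi_pD (s t : ℝ) : π * pD s t = π * s / 4 + (π - Real.arccos (Xst s t)) / 2 := by
  rw [pD, Xst]
  have : (Real.cos (π * s / 2) - Real.cos (π * t / 2)) / 2
      = -((Real.cos (π * t / 2) - Real.cos (π * s / 2)) / 2) := by ring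
  rw [this, Real.arccos_neg]
  field_simp

lemma half_mem {β γ : ℝ} (hβ : |β| < π) (hγ0 : 0 < γ) (hγπ : γ < π)
    (hcos : Real.cos γ < Real.cos β) : 0 < (β + γ) / 2 ∧ (β + γ) / 2 < π := by
  obtain ⟨hβ1, hβ2⟩ := abs_lt.1 hβ
  refine ⟨?_, by linarith⟩
  rcases le_or_gt 0 β with hb0 | hb0
  · linarith
  · have hmem : -β ∈ Set.Icc (0:ℝ) π := ⟨by linarith, by linarith⟩
    have hmem2 : γ ∈ Set.Icc (0:ℝ) π := ⟨by linarith, by linarith⟩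
    by_contra hc
    push_neg at hc
    have hγβ : γ ≤ -β := by linarith
    rcases eq_or_lt_of_le hγβ with he | hlt
    · rw [he, Real.cos_neg] at hcos; linarith
    · have := Real.strictAntiOn_cos hmem2 hmem hlt
      rw [Real.cos_neg] at this
      linarith

lemma pA_mem (h : |s| + |t| < 2) : 0 < π * pA s t ∧ π * pA s t < π := by
  have hab := habs_ab h
  have hb : |π * t / 2| < π := by have := abs_nonneg (π * s / 2); linarith
  obtain ⟨hα0, hαπ⟩ := arccos_X_mem h
  have hcos : Real.cos (Real.arccos (Xst s t)) < Real.cos (π * t / 2) := by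
    rw [cos_arccos_X h, Xst]
    have := hDp_pos h; rw [Dp] at this; linarith
  have := half_mem hb hα0 hαπ hcos
  rw [pi_pA]
  constructor <;> [linarith [this.1]; linarith [this.2]]

lemma pB_mem (h : |s| + |t| < 2) : 0 < π * pB s t ∧ π * pB s t < π := by
  have hab := habs_ab h
  have hb : |-(π * t / 2)| < π := by rw [abs_neg]; have := abs_nonneg (π * s / 2); linarith
  obtain ⟨hα0, hαπ⟩ := arccos_X_mem h
  have hcos : Real.cos (Real.arccos (Xst s t)) < Real.cos (-(π * t / 2)) := by
    rw [Real.cos_neg, cos_arccos_X h, Xst]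
    have := hDp_pos h; rw [Dp] at this; linarith
  have := half_mem hb hα0 hαπ hcos
  rw [pi_pB]
  constructor <;> [linarith [this.1]; linarith [this.2]]

lemma pD_mem (h : |s| + |t| < 2) : 0 < π * pD s t ∧ π * pD s t < π := by
  have hab := habs_ab h
  have ha : |π * s / 2| < π := by have := abs_nonneg (π * t / 2); linarith
  obtain ⟨hα0, hαπ⟩ := arccos_X_mem h
  have hcos : Real.cos (π - Real.arccos (Xst s t)) < Real.cos (π * s / 2) := by
    rw [Real.cos_pi_sub, cos_arccos_X h, Xst]
    have := hDp_pos h; rw [Dp] at this; linarith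
  have := half_mem ha (by linarith) (by linarith) hcos
  rw [pi_pD]
  constructor <;> [linarith [this.1]; linarith [this.2]]

lemma pC_mem (h : |s| + |t| < 2) : 0 < π * pC s t ∧ π * pC s t < π := by
  have hab := habs_ab h
  have ha : |-(π * s / 2)| < π := by rw [abs_neg]; have := abs_nonneg (π * t / 2); linarith
  obtain ⟨hα0, hαπ⟩ := arccos_X_mem h
  have hcos : Real.cos (π - Real.arccos (Xst s t)) < Real.cos (-(π * s / 2)) := by
    rw [Real.cos_neg, Real.cos_pi_sub, cos_arccos_X h, Xst]
    have := hDp_pos h; rw [Dp] at this; linarith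
  have := half_mem ha (by linarith) (by linarith) hcos
  rw [pi_pC]
  constructor <;> [linarith [this.1]; linarith [this.2]]

lemma sinA_pos (h : |s| + |t| < 2) : 0 < Real.sin (π * pA s t) :=
  Real.sin_pos_of_pos_of_lt_pi (pA_mem h).1 (pA_mem h).2
lemma sinB_pos (h : |s| + |t| < 2) : 0 < Real.sin (π * pB s t) :=
  Real.sin_pos_of_pos_of_lt_pi (pB_mem h).1 (pB_mem h).2
lemma sinC_pos (h : |s| + |t| < 2) : 0 < Real.sin (π * pC s t) :=
  Real.sin_pos_of_pos_of_lt_pi (pC_mem h).1 (pC_mem h).2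
lemma sinD_pos (h : |s| + |t| < 2) : 0 < Real.sin (π * pD s t) :=
  Real.sin_pos_of_pos_of_lt_pi (pD_mem h).1 (pD_mem h).2

lemma sin_sum_AB (h : |s| + |t| < 2) :
    Real.sin (π * pA s t) * Real.cos (π * pB s t)
      + Real.cos (π * pA s t) * Real.sin (π * pB s t) = Qst s t := by
  have hsum : π * pA s t + π * pB s t = Real.arccos (Xst s t) := by
    rw [pi_pA, pi_pB]; ring
  have := Real.sin_add (π * pA s t) (π * pB s t)
  rw [hsum, sin_arccos_X h] at this
  linarith

lemma sin_diff_AB (s t : ℝ) :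
    Real.sin (π * pA s t) * Real.cos (π * pB s t)
      - Real.cos (π * pA s t) * Real.sin (π * pB s t) = Real.sin (π * t / 2) := by
  have hdiff : π * pA s t - π * pB s t = π * t / 2 := by
    rw [pi_pA, pi_pB]; ring
  have := Real.sin_sub (π * pA s t) (π * pB s t)
  rw [hdiff] at this
  linarith

lemma sin_sum_CD (h : |s| + |t| < 2) :
    Real.sin (π * pD s t) * Real.cos (π * pC s t)
      + Real.cos (π * pD s t) * Real.sin (π * pC s t) = Qst s t := by
  have hsum : π * pD s t + π * pC s t = π - Real.arccos (Xst s t) := by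
    rw [pi_pC, pi_pD]; ring
  have := Real.sin_add (π * pD s t) (π * pC s t)
  rw [hsum, Real.sin_pi_sub, sin_arccos_X h] at this
  linarith

lemma sin_diff_CD (s t : ℝ) :
    Real.sin (π * pD s t) * Real.cos (π * pC s t)
      - Real.cos (π * pD s t) * Real.sin (π * pC s t) = Real.sin (π * s / 2) := by
  have hdiff : π * pD s t - π * pC s t = π * s / 2 := by
    rw [pi_pC, pi_pD]; ring
  have := Real.sin_sub (π * pD s t) (π * pC s t)
  rw [hdiff] at this
  linarith

lemma prod_AB (h : |s| + |t| < 2) :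
    Real.sin (π * pA s t) * Real.sin (π * pB s t) = Dp s t / 4 := by
  have hsum : π * pA s t + π * pB s t = Real.arccos (Xst s t) := by
    rw [pi_pA, pi_pB]; ring
  have hdiff : π * pA s t - π * pB s t = π * t / 2 := by
    rw [pi_pA, pi_pB]; ring
  have hc := Real.cos_sub (π * pA s t) (π * pB s t)
  have hc2 := Real.cos_add (π * pA s t) (π * pB s t)
  rw [hdiff] at hc
  rw [hsum, cos_arccos_X h] at hc2
  rw [Xst] at hc2
  rw [Dp]
  nlinarith [hc, hc2]

lemma prod_CD (h : |s| + |t| < 2) :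
    Real.sin (π * pC s t) * Real.sin (π * pD s t) = Dp s t / 4 := by
  have hsum : π * pD s t + π * pC s t = π - Real.arccos (Xst s t) := by
    rw [pi_pC, pi_pD]; ring
  have hdiff : π * pD s t - π * pC s t = π * s / 2 := by
    rw [pi_pC, pi_pD]; ring
  have hc := Real.cos_sub (π * pD s t) (π * pC s t)
  have hc2 := Real.cos_add (π * pD s t) (π * pC s t)
  rw [hdiff] at hc
  rw [hsum, Real.cos_pi_sub, cos_arccos_X h] at hc2
  rw [Xst] at hc2
  rw [Dp]
  nlinarith [hc, hc2]

end facts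

noncomputable abbrev fstL : ℝ × ℝ →L[ℝ] ℝ := ContinuousLinearMap.fst ℝ ℝ ℝ
noncomputable abbrev sndL : ℝ × ℝ →L[ℝ] ℝ := ContinuousLinearMap.snd ℝ ℝ ℝ

noncomputable def E1 (s t : ℝ) : ℝ :=
  (1/4) * (Real.log (Real.sin (π * pC s t)) - Real.log (Real.sin (π * pD s t)))
noncomputable def E2 (s t : ℝ) : ℝ :=
  (1/4) * (Real.log (Real.sin (π * pB s t)) - Real.log (Real.sin (π * pA s t)))

section fderiv
variable {s t : ℝ}

lemma hasDerivAt_cos_half (y : ℝ) :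
    HasDerivAt (fun y : ℝ => Real.cos (π * y / 2)) (-Real.sin (π * y / 2) * (π / 2)) y := by
  have h0 : HasDerivAt (fun y : ℝ => π * y / 2) (π / 2) y := by
    simpa using ((hasDerivAt_id y).const_mul π).div_const 2
  exact (Real.hasDerivAt_cos (π * y / 2)).comp y h0

lemma hasFDerivAt_X (s t : ℝ) :
    HasFDerivAt (fun p : ℝ × ℝ => (Real.cos (π * p.2 / 2) - Real.cos (π * p.1 / 2)) / 2)
      ((π * Real.sin (π * s / 2) / 4) • fstL + (-(π * Real.sin (π * t / 2)) / 4) • sndL)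
      (s, t) := by
  have hc1 : HasFDerivAt (fun p : ℝ × ℝ => Real.cos (π * p.1 / 2))
      ((-Real.sin (π * s / 2) * (π / 2)) • fstL) (s, t) :=
    HasDerivAt.comp_hasFDerivAt (h₂ := fun y : ℝ => Real.cos (π * y / 2)) (s, t) (hasDerivAt_cos_half s) fstL.hasFDerivAt
  have hc2 : HasFDerivAt (fun p : ℝ × ℝ => Real.cos (π * p.2 / 2))
      ((-Real.sin (π * t / 2) * (π / 2)) • sndL) (s, t) :=
    HasDerivAt.comp_hasFDerivAt (h₂ := fun y : ℝ => Real.cos (π * y / 2)) (s, t) (hasDerivAt_cos_half t) sndL.hasFDerivAt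
  have h3 : HasDerivAt (fun y : ℝ => y / 2) (1 / 2) (Real.cos (π * t / 2) - Real.cos (π * s / 2)) := by
    simpa using (hasDerivAt_id (Real.cos (π * t / 2) - Real.cos (π * s / 2))).div_const 2
  have := HasDerivAt.comp_hasFDerivAt (s, t) h3 (hc2.sub hc1)
  refine this.congr_fderiv ?_
  refine ContinuousLinearMap.ext fun v => ?_
  simp
  ring

lemma hasFDerivAt_negX (s t : ℝ) :
    HasFDerivAt (fun p : ℝ × ℝ => (Real.cos (π * p.1 / 2) - Real.cos (π * p.2 / 2)) / 2)
      ((-(π * Real.sin (π * s / 2)) / 4) • fstL + (π * Real.sin (π * t / 2) / 4) • sndL)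
      (s, t) := by
  have hc1 : HasFDerivAt (fun p : ℝ × ℝ => Real.cos (π * p.1 / 2))
      ((-Real.sin (π * s / 2) * (π / 2)) • fstL) (s, t) :=
    HasDerivAt.comp_hasFDerivAt (h₂ := fun y : ℝ => Real.cos (π * y / 2)) (s, t) (hasDerivAt_cos_half s) fstL.hasFDerivAt
  have hc2 : HasFDerivAt (fun p : ℝ × ℝ => Real.cos (π * p.2 / 2))
      ((-Real.sin (π * t / 2) * (π / 2)) • sndL) (s, t) :=
    HasDerivAt.comp_hasFDerivAt (h₂ := fun y : ℝ => Real.cos (π * y / 2)) (s, t) (hasDerivAt_cos_half t) sndL.hasFDerivAt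
  have h3 : HasDerivAt (fun y : ℝ => y / 2) (1 / 2) (Real.cos (π * s / 2) - Real.cos (π * t / 2)) := by
    simpa using (hasDerivAt_id (Real.cos (π * s / 2) - Real.cos (π * t / 2))).div_const 2
  have := HasDerivAt.comp_hasFDerivAt (s, t) h3 (hc1.sub hc2)
  refine this.congr_fderiv ?_
  refine ContinuousLinearMap.ext fun v => ?_
  simp
  ring

lemma hasFDerivAt_arccosX (h : |s| + |t| < 2) :
    HasFDerivAt (fun p : ℝ × ℝ =>
        Real.arccos ((Real.cos (π * p.2 / 2) - Real.cos (π * p.1 / 2)) / 2))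
      ((-(π * Real.sin (π * s / 2)) / (4 * Qst s t)) • fstL
        + (π * Real.sin (π * t / 2) / (4 * Qst s t)) • sndL) (s, t) := by
  obtain ⟨hx1, hx2⟩ := hX_mem h
  have harc : HasDerivAt Real.arccos (-(1 / Real.sqrt (1 - Xst s t ^ 2))) (Xst s t) :=
    Real.hasDerivAt_arccos (by intro hh; rw [hh] at hx1; linarith)
      (by intro hh; rw [hh] at hx2; linarith)
  have := HasDerivAt.comp_hasFDerivAt (s, t) harc (hasFDerivAt_X s t)
  refine this.congr_fderiv ?_
  refine ContinuousLinearMap.ext fun v => ?_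
  have hq : Real.sqrt (1 - Xst s t ^ 2) = Qst s t := rfl
  rw [hq]
  have hq0 : Qst s t ≠ 0 := (hQ_pos h).ne'
  simp
  field_simp

lemma hasFDerivAt_arccosNegX (h : |s| + |t| < 2) :
    HasFDerivAt (fun p : ℝ × ℝ =>
        Real.arccos ((Real.cos (π * p.1 / 2) - Real.cos (π * p.2 / 2)) / 2))
      ((π * Real.sin (π * s / 2) / (4 * Qst s t)) • fstL
        + (-(π * Real.sin (π * t / 2)) / (4 * Qst s t)) • sndL) (s, t) := by
  obtain ⟨hx1, hx2⟩ := hX_mem h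
  have hval : (Real.cos (π * s / 2) - Real.cos (π * t / 2)) / 2 = -(Xst s t) := by
    rw [Xst]; ring
  have harc : HasDerivAt Real.arccos (-(1 / Real.sqrt (1 - (-(Xst s t)) ^ 2))) (-(Xst s t)) :=
    Real.hasDerivAt_arccos (by intro hh; rw [neg_eq_iff_eq_neg] at hh; rw [hh] at hx2; linarith)
      (by intro hh; rw [neg_eq_iff_eq_neg] at hh; rw [hh] at hx1; linarith)
  have harc2 : HasDerivAt Real.arccos (-(1 / Real.sqrt (1 - (-(Xst s t)) ^ 2)))
      ((Real.cos (π * s / 2) - Real.cos (π * t / 2)) / 2) := by rw [hval]; exact harc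
  have := HasDerivAt.comp_hasFDerivAt (s, t) harc2 (hasFDerivAt_negX s t)
  refine this.congr_fderiv ?_
  refine ContinuousLinearMap.ext fun v => ?_
  have hq : Real.sqrt (1 - (-(Xst s t)) ^ 2) = Qst s t := by rw [neg_pow]; norm_num; rfl
  rw [hq]
  have hq0 : Qst s t ≠ 0 := (hQ_pos h).ne'
  simp
  field_simp
  try ring
  try exact Or.inl trivial

end fderiv

section fderiv2
variable {s t : ℝ}

lemma log_identity (h : |s| + |t| < 2) :
    Real.log (Real.sin (π * pA s t)) + Real.log (Real.sin (π * pB s t))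
      = Real.log (Real.sin (π * pC s t)) + Real.log (Real.sin (π * pD s t)) := by
  rw [← Real.log_mul (sinA_pos h).ne' (sinB_pos h).ne',
    ← Real.log_mul (sinC_pos h).ne' (sinD_pos h).ne', prod_AB h, prod_CD h]

lemma hasFDerivAt_piPA (h : |s| + |t| < 2) :
    HasFDerivAt (fun p : ℝ × ℝ => π * pA p.1 p.2)
      ((-(π * Real.sin (π * s / 2)) / (8 * Qst s t)) • fstL
        + (π / 4 + π * Real.sin (π * t / 2) / (8 * Qst s t)) • sndL) (s, t) := by
  have h0 : HasDerivAt (fun y : ℝ => y / 4) (1 / 4) t := by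
    simpa using (hasDerivAt_id t).div_const 4
  have ht4 : HasFDerivAt (fun p : ℝ × ℝ => p.2 / 4) (((1:ℝ) / 4) • sndL) (s, t) :=
    HasDerivAt.comp_hasFDerivAt (h₂ := fun y : ℝ => y / 4) (s, t) h0 sndL.hasFDerivAt
  have hmul := (hasFDerivAt_arccosX h).const_mul (1 / (2 * π))
  have hsum := (ht4.add hmul).const_mul π
  refine hsum.congr_fderiv ?_
  refine ContinuousLinearMap.ext fun v => ?_
  have hq0 : Qst s t ≠ 0 := (hQ_pos h).ne'
  simp
  field_simp
  ring

lemma hasFDerivAt_piPB (h : |s| + |t| < 2) :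
    HasFDerivAt (fun p : ℝ × ℝ => π * pB p.1 p.2)
      ((-(π * Real.sin (π * s / 2)) / (8 * Qst s t)) • fstL
        + (-(π / 4) + π * Real.sin (π * t / 2) / (8 * Qst s t)) • sndL) (s, t) := by
  have h0 : HasDerivAt (fun y : ℝ => -y / 4) (-(1 / 4)) t := by
    have := ((hasDerivAt_id t).neg).div_const 4
    exact this.congr_deriv (by norm_num)
  have ht4 : HasFDerivAt (fun p : ℝ × ℝ => -p.2 / 4) ((-(1:ℝ) / 4) • sndL) (s, t) := by
    have := HasDerivAt.comp_hasFDerivAt (s, t) h0 sndL.hasFDerivAt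
    refine this.congr_fderiv ?_
    refine ContinuousLinearMap.ext fun v => ?_
    simp; ring
  have hmul := (hasFDerivAt_arccosX h).const_mul (1 / (2 * π))
  have hsum := (ht4.add hmul).const_mul π
  refine hsum.congr_fderiv ?_
  refine ContinuousLinearMap.ext fun v => ?_
  have hq0 : Qst s t ≠ 0 := (hQ_pos h).ne'
  simp
  field_simp
  ring

lemma hasFDerivAt_piPC (h : |s| + |t| < 2) :
    HasFDerivAt (fun p : ℝ × ℝ => π * pC p.1 p.2)
      ((-(π / 4) + π * Real.sin (π * s / 2) / (8 * Qst s t)) • fstL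
        + (-(π * Real.sin (π * t / 2)) / (8 * Qst s t)) • sndL) (s, t) := by
  have h0 : HasDerivAt (fun y : ℝ => -y / 4) (-(1 / 4)) s := by
    have := ((hasDerivAt_id s).neg).div_const 4
    exact this.congr_deriv (by norm_num)
  have hs4 : HasFDerivAt (fun p : ℝ × ℝ => -p.1 / 4) ((-(1:ℝ) / 4) • fstL) (s, t) := by
    have := HasDerivAt.comp_hasFDerivAt (s, t) h0 fstL.hasFDerivAt
    refine this.congr_fderiv ?_
    refine ContinuousLinearMap.ext fun v => ?_
    simp; ring
  have hmul := (hasFDerivAt_arccosNegX h).const_mul (1 / (2 * π))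
  have hsum := (hs4.add hmul).const_mul π
  refine hsum.congr_fderiv ?_
  refine ContinuousLinearMap.ext fun v => ?_
  have hq0 : Qst s t ≠ 0 := (hQ_pos h).ne'
  simp
  field_simp
  ring

lemma hasFDerivAt_piPD (h : |s| + |t| < 2) :
    HasFDerivAt (fun p : ℝ × ℝ => π * pD p.1 p.2)
      ((π / 4 + π * Real.sin (π * s / 2) / (8 * Qst s t)) • fstL
        + (-(π * Real.sin (π * t / 2)) / (8 * Qst s t)) • sndL) (s, t) := by
  have h0 : HasDerivAt (fun y : ℝ => y / 4) (1 / 4) s := by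
    simpa using (hasDerivAt_id s).div_const 4
  have hs4 : HasFDerivAt (fun p : ℝ × ℝ => p.1 / 4) (((1:ℝ) / 4) • fstL) (s, t) :=
    HasDerivAt.comp_hasFDerivAt (h₂ := fun y : ℝ => y / 4) (s, t) h0 fstL.hasFDerivAt
  have hmul := (hasFDerivAt_arccosNegX h).const_mul (1 / (2 * π))
  have hsum := (hs4.add hmul).const_mul π
  refine hsum.congr_fderiv ?_
  refine ContinuousLinearMap.ext fun v => ?_
  have hq0 : Qst s t ≠ 0 := (hQ_pos h).ne'
  simp
  field_simp
  ring

lemma hasFDerivAt_entP (h : |s| + |t| < 2) :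
    HasFDerivAt (fun p : ℝ × ℝ => ent p.1 p.2)
      (E1 s t • fstL + E2 s t • sndL) (s, t) := by
  have hA := HasDerivAt.comp_hasFDerivAt (s, t)
    (lob_hasDerivAt (pA_mem h).1 (pA_mem h).2) (hasFDerivAt_piPA h)
  have hB := HasDerivAt.comp_hasFDerivAt (s, t)
    (lob_hasDerivAt (pB_mem h).1 (pB_mem h).2) (hasFDerivAt_piPB h)
  have hC := HasDerivAt.comp_hasFDerivAt (s, t)
    (lob_hasDerivAt (pC_mem h).1 (pC_mem h).2) (hasFDerivAt_piPC h)
  have hD := HasDerivAt.comp_hasFDerivAt (s, t)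
    (lob_hasDerivAt (pD_mem h).1 (pD_mem h).2) (hasFDerivAt_piPD h)
  have hsum := (((hA.add hB).add hC).add hD).const_mul (1 / π)
  refine hsum.congr_fderiv ?_
  refine ContinuousLinearMap.ext fun v => ?_
  have hq0 : Qst s t ≠ 0 := (hQ_pos h).ne'
  have hlog := log_identity h
  have e2A : Real.log (2 * Real.sin (π * pA s t))
      = Real.log 2 + Real.log (Real.sin (π * pA s t)) :=
    Real.log_mul two_ne_zero (sinA_pos h).ne'
  have e2B : Real.log (2 * Real.sin (π * pB s t))
      = Real.log 2 + Real.log (Real.sin (π * pB s t)) :=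
    Real.log_mul two_ne_zero (sinB_pos h).ne'
  have e2C : Real.log (2 * Real.sin (π * pC s t))
      = Real.log 2 + Real.log (Real.sin (π * pC s t)) :=
    Real.log_mul two_ne_zero (sinC_pos h).ne'
  have e2D : Real.log (2 * Real.sin (π * pD s t))
      = Real.log 2 + Real.log (Real.sin (π * pD s t)) :=
    Real.log_mul two_ne_zero (sinD_pos h).ne'
  have hsub : Real.log (Real.sin (π * pA s t))
      = Real.log (Real.sin (π * pC s t)) + Real.log (Real.sin (π * pD s t))
        - Real.log (Real.sin (π * pB s t)) := by linarith
  simp [E1, E2]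
  rw [e2A, e2B, e2C, e2D, hsub]
  field_simp
  ring

end fderiv2

noncomputable def SSc (s t : ℝ) : ℝ :=
  π * (Real.sin (π * s / 2) ^ 2 - 2 * Qst s t ^ 2) / (8 * Qst s t * Dp s t)
noncomputable def TTc (s t : ℝ) : ℝ :=
  π * (Real.sin (π * t / 2) ^ 2 - 2 * Qst s t ^ 2) / (8 * Qst s t * Dp s t)
noncomputable def STc (s t : ℝ) : ℝ :=
  -(π * Real.sin (π * s / 2) * Real.sin (π * t / 2)) / (8 * Qst s t * Dp s t)

section fderiv3
variable {s t : ℝ}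

lemma cotC (h : |s| + |t| < 2) : Real.cos (π * pC s t) / Real.sin (π * pC s t)
    = 2 * (Qst s t + Real.sin (π * s / 2)) / Dp s t := by
  have hp := prod_CD h
  have h1 := sin_sum_CD (s := s) (t := t) h
  have h2 := sin_diff_CD s t
  have hs : Real.sin (π * pD s t) * Real.cos (π * pC s t)
      = (Qst s t + Real.sin (π * s / 2)) / 2 := by linarith
  rw [div_eq_div_iff (sinC_pos h).ne' (hDp_pos h).ne']
  linear_combination 4 * Real.sin (π * pC s t) * hs
    - 4 * Real.cos (π * pC s t) * hp

lemma cotD (h : |s| + |t| < 2) : Real.cos (π * pD s t) / Real.sin (π * pD s t)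
    = 2 * (Qst s t - Real.sin (π * s / 2)) / Dp s t := by
  have hp := prod_CD h
  have h1 := sin_sum_CD (s := s) (t := t) h
  have h2 := sin_diff_CD s t
  have hs : Real.cos (π * pD s t) * Real.sin (π * pC s t)
      = (Qst s t - Real.sin (π * s / 2)) / 2 := by linarith
  rw [div_eq_div_iff (sinD_pos h).ne' (hDp_pos h).ne']
  linear_combination 4 * Real.sin (π * pD s t) * hs
    - 4 * Real.cos (π * pD s t) * hp

lemma cotA (h : |s| + |t| < 2) : Real.cos (π * pA s t) / Real.sin (π * pA s t)
    = 2 * (Qst s t - Real.sin (π * t / 2)) / Dp s t := by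
  have hp := prod_AB h
  have h1 := sin_sum_AB (s := s) (t := t) h
  have h2 := sin_diff_AB s t
  have hs : Real.cos (π * pA s t) * Real.sin (π * pB s t)
      = (Qst s t - Real.sin (π * t / 2)) / 2 := by linarith
  rw [div_eq_div_iff (sinA_pos h).ne' (hDp_pos h).ne']
  linear_combination 4 * Real.sin (π * pA s t) * hs
    - 4 * Real.cos (π * pA s t) * hp

lemma cotB (h : |s| + |t| < 2) : Real.cos (π * pB s t) / Real.sin (π * pB s t)
    = 2 * (Qst s t + Real.sin (π * t / 2)) / Dp s t := by
  have hp := prod_AB h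
  have h1 := sin_sum_AB (s := s) (t := t) h
  have h2 := sin_diff_AB s t
  have hs : Real.sin (π * pA s t) * Real.cos (π * pB s t)
      = (Qst s t + Real.sin (π * t / 2)) / 2 := by linarith
  rw [div_eq_div_iff (sinB_pos h).ne' (hDp_pos h).ne']
  linear_combination 4 * Real.sin (π * pB s t) * hs
    - 4 * Real.cos (π * pB s t) * hp

lemma hasFDerivAt_E1P (h : |s| + |t| < 2) :
    HasFDerivAt (fun p : ℝ × ℝ => E1 p.1 p.2)
      (SSc s t • fstL + STc s t • sndL) (s, t) := by
  have hlc := HasDerivAt.comp_hasFDerivAt (s, t)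
    (Real.hasDerivAt_log (sinC_pos h).ne')
    (HasDerivAt.comp_hasFDerivAt (s, t)
      (Real.hasDerivAt_sin (π * pC s t)) (hasFDerivAt_piPC h))
  have hld := HasDerivAt.comp_hasFDerivAt (s, t)
    (Real.hasDerivAt_log (sinD_pos h).ne')
    (HasDerivAt.comp_hasFDerivAt (s, t)
      (Real.hasDerivAt_sin (π * pD s t)) (hasFDerivAt_piPD h))
  have hsum := (hlc.sub hld).const_mul (1 / 4 : ℝ)
  refine hsum.congr_fderiv ?_
  refine ContinuousLinearMap.ext fun v => ?_
  have hq0 : Qst s t ≠ 0 := (hQ_pos h).ne'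
  have hD0 : Dp s t ≠ 0 := (hDp_pos h).ne'
  have hsC := (sinC_pos h).ne'
  have hsD := (sinD_pos h).ne'
  have hC' := cotC h
  have hD' := cotD h
  simp [SSc, STc]
  have eC : ∀ y : ℝ, (Real.sin (π * pC s t))⁻¹ * (Real.cos (π * pC s t) * y)
      = 2 * (Qst s t + Real.sin (π * s / 2)) / Dp s t * y := by
    intro y
    rw [← hC']; field_simp
  have eD : ∀ y : ℝ, (Real.sin (π * pD s t))⁻¹ * (Real.cos (π * pD s t) * y)
      = 2 * (Qst s t - Real.sin (π * s / 2)) / Dp s t * y := by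
    intro y
    rw [← hD']; field_simp
  simp only [eC, eD]
  field_simp
  ring

lemma hasFDerivAt_E2P (h : |s| + |t| < 2) :
    HasFDerivAt (fun p : ℝ × ℝ => E2 p.1 p.2)
      (STc s t • fstL + TTc s t • sndL) (s, t) := by
  have hlb := HasDerivAt.comp_hasFDerivAt (s, t)
    (Real.hasDerivAt_log (sinB_pos h).ne')
    (HasDerivAt.comp_hasFDerivAt (s, t)
      (Real.hasDerivAt_sin (π * pB s t)) (hasFDerivAt_piPB h))
  have hla := HasDerivAt.comp_hasFDerivAt (s, t)
    (Real.hasDerivAt_log (sinA_pos h).ne')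
    (HasDerivAt.comp_hasFDerivAt (s, t)
      (Real.hasDerivAt_sin (π * pA s t)) (hasFDerivAt_piPA h))
  have hsum := (hlb.sub hla).const_mul (1 / 4 : ℝ)
  refine hsum.congr_fderiv ?_
  refine ContinuousLinearMap.ext fun v => ?_
  have hq0 : Qst s t ≠ 0 := (hQ_pos h).ne'
  have hD0 : Dp s t ≠ 0 := (hDp_pos h).ne'
  have hA' := cotA h
  have hB' := cotB h
  simp [STc, TTc]
  have eA : ∀ y : ℝ, (Real.sin (π * pA s t))⁻¹ * (Real.cos (π * pA s t) * y)
      = 2 * (Qst s t - Real.sin (π * t / 2)) / Dp s t * y := by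
    intro y
    rw [← hA']; field_simp
  have eB : ∀ y : ℝ, (Real.sin (π * pB s t))⁻¹ * (Real.cos (π * pB s t) * y)
      = 2 * (Qst s t + Real.sin (π * t / 2)) / Dp s t * y := by
    intro y
    rw [← hB']; field_simp
  simp only [eA, eB]
  field_simp
  ring

end fderiv3

section main
variable {s t : ℝ}

lemma hasDerivAt_ent_s (h : |s| + |t| < 2) :
    HasDerivAt (fun s' => ent s' t) (E1 s t) s := by
  have hline : HasDerivAt (fun s' : ℝ => (s', t)) ((1:ℝ), (0:ℝ)) s :=
    (hasDerivAt_id s).prodMk (hasDerivAt_const s t)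
  have := (hasFDerivAt_entP h).comp_hasDerivAt s hline
  exact this.congr_deriv (by simp)

lemma hasDerivAt_ent_t (h : |s| + |t| < 2) :
    HasDerivAt (fun t' => ent s t') (E2 s t) t := by
  have hline : HasDerivAt (fun t' : ℝ => (s, t')) ((0:ℝ), (1:ℝ)) t :=
    (hasDerivAt_const t s).prodMk (hasDerivAt_id t)
  have := (hasFDerivAt_entP h).comp_hasDerivAt t hline
  exact this.congr_deriv (by simp)

lemma hasDerivAt_E1_s (h : |s| + |t| < 2) :
    HasDerivAt (fun s' => E1 s' t) (SSc s t) s := by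
  have hline : HasDerivAt (fun s' : ℝ => (s', t)) ((1:ℝ), (0:ℝ)) s :=
    (hasDerivAt_id s).prodMk (hasDerivAt_const s t)
  have := (hasFDerivAt_E1P h).comp_hasDerivAt s hline
  exact this.congr_deriv (by simp)

lemma hasDerivAt_E2_s (h : |s| + |t| < 2) :
    HasDerivAt (fun s' => E2 s' t) (STc s t) s := by
  have hline : HasDerivAt (fun s' : ℝ => (s', t)) ((1:ℝ), (0:ℝ)) s :=
    (hasDerivAt_id s).prodMk (hasDerivAt_const s t)
  have := (hasFDerivAt_E2P h).comp_hasDerivAt s hline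
  exact this.congr_deriv (by simp)

lemma hasDerivAt_E2_t (h : |s| + |t| < 2) :
    HasDerivAt (fun t' => E2 s t') (TTc s t) t := by
  have hline : HasDerivAt (fun t' : ℝ => (s, t')) ((0:ℝ), (1:ℝ)) t :=
    (hasDerivAt_const t s).prodMk (hasDerivAt_id t)
  have := (hasFDerivAt_E2P h).comp_hasDerivAt t hline
  exact this.congr_deriv (by simp)

lemma deriv2_ss (h : |s| + |t| < 2) :
    deriv (fun s' => deriv (fun s'' => ent s'' t) s') s = SSc s t := by
  have hopen : IsOpen {s' : ℝ | |s'| + |t| < 2} :=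
    isOpen_lt (continuous_abs.add continuous_const) continuous_const
  have hev : (fun s' => deriv (fun s'' => ent s'' t) s') =ᶠ[nhds s] fun s' => E1 s' t := by
    filter_upwards [hopen.mem_nhds h] with x hx
    exact (hasDerivAt_ent_s hx).deriv
  rw [hev.deriv_eq]
  exact (hasDerivAt_E1_s h).deriv

lemma deriv2_tt (h : |s| + |t| < 2) :
    deriv (fun t' => deriv (fun t'' => ent s t'') t') t = TTc s t := by
  have hopen : IsOpen {t' : ℝ | |s| + |t'| < 2} :=
    isOpen_lt (continuous_const.add continuous_abs) continuous_const
  have hev : (fun t' => deriv (fun t'' => ent s t'') t') =ᶠ[nhds t] fun t' => E2 s t' := by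
    filter_upwards [hopen.mem_nhds h] with x hx
    exact (hasDerivAt_ent_t hx).deriv
  rw [hev.deriv_eq]
  exact (hasDerivAt_E2_t h).deriv

lemma deriv2_st (h : |s| + |t| < 2) :
    deriv (fun s' => deriv (fun t' => ent s' t') t) s = STc s t := by
  have hopen : IsOpen {s' : ℝ | |s'| + |t| < 2} :=
    isOpen_lt (continuous_abs.add continuous_const) continuous_const
  have hev : (fun s' => deriv (fun t' => ent s' t') t) =ᶠ[nhds s] fun s' => E2 s' t := by
    filter_upwards [hopen.mem_nhds h] with x hx
    exact (hasDerivAt_ent_t hx).deriv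
  rw [hev.deriv_eq]
  exact (hasDerivAt_E2_s h).deriv

lemma key_id (h : |s| + |t| < 2) :
    2 * Qst s t ^ 2 = Real.sin (π * s / 2) ^ 2 + Real.sin (π * t / 2) ^ 2 + Dp s t ^ 2 / 2 := by
  have h1 := hQ_sq h
  have h2 := Real.sin_sq_add_cos_sq (π * s / 2)
  have h3 := Real.sin_sq_add_cos_sq (π * t / 2)
  rw [Xst] at h1
  rw [Dp]
  nlinarith [h1, h2, h3]

lemma SSc_neg (h : |s| + |t| < 2) : SSc s t < 0 := by
  have hq := hQ_pos h
  have hD := hDp_pos h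
  have hk := key_id h
  have hπ := Real.pi_pos
  rw [SSc]
  apply div_neg_of_neg_of_pos
  · have h1 : Real.sin (π * s / 2) ^ 2 - 2 * Qst s t ^ 2 < 0 := by
      nlinarith [sq_nonneg (Real.sin (π * t / 2)), sq_nonneg (Dp s t), pow_pos hD 2]
    exact mul_neg_of_pos_of_neg hπ h1
  · positivity

lemma TTc_neg (h : |s| + |t| < 2) : TTc s t < 0 := by
  have hq := hQ_pos h
  have hD := hDp_pos h
  have hk := key_id h
  have hπ := Real.pi_pos
  rw [TTc]
  apply div_neg_of_neg_of_pos
  · have h1 : Real.sin (π * t / 2) ^ 2 - 2 * Qst s t ^ 2 < 0 := by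
      nlinarith [sq_nonneg (Real.sin (π * s / 2)), sq_nonneg (Dp s t), pow_pos hD 2]
    exact mul_neg_of_pos_of_neg hπ h1
  · positivity

lemma det_pos (h : |s| + |t| < 2) : SSc s t * TTc s t - STc s t ^ 2 > 0 := by
  have hq := hQ_pos h
  have hD := hDp_pos h
  have hk := key_id h
  have hπ := Real.pi_pos
  have e : SSc s t * TTc s t - STc s t ^ 2
      = π ^ 2 * ((Real.sin (π * s / 2) ^ 2 - 2 * Qst s t ^ 2)
          * (Real.sin (π * t / 2) ^ 2 - 2 * Qst s t ^ 2)
          - Real.sin (π * s / 2) ^ 2 * Real.sin (π * t / 2) ^ 2)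
        / (8 * Qst s t * Dp s t) ^ 2 := by
    rw [SSc, TTc, STc]
    field_simp
  rw [e]
  apply div_pos
  · have h1 : (Real.sin (π * s / 2) ^ 2 - 2 * Qst s t ^ 2)
          * (Real.sin (π * t / 2) ^ 2 - 2 * Qst s t ^ 2)
          - Real.sin (π * s / 2) ^ 2 * Real.sin (π * t / 2) ^ 2 > 0 := by
      nlinarith [sq_nonneg (Real.sin (π * s / 2)), sq_nonneg (Real.sin (π * t / 2)),
        pow_pos hD 2, sq_nonneg (Real.sin (π * s / 2) + Real.sin (π * t / 2))]
    positivity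
  · positivity

end main

section concave

lemma region_open : IsOpen {p : ℝ × ℝ | |p.1| + |p.2| < 2} :=
  isOpen_lt (continuous_fst.abs.add continuous_snd.abs) continuous_const

lemma region_convex : Convex ℝ {p : ℝ × ℝ | |p.1| + |p.2| < 2} := by
  intro p hp q hq a b ha hb hab
  simp only [Set.mem_setOf_eq] at *
  have h1 : |(a • p + b • q).1| ≤ a * |p.1| + b * |q.1| := by
    simp only [Prod.fst_add, Prod.smul_fst, smul_eq_mul]
    calc |a * p.1 + b * q.1| ≤ |a * p.1| + |b * q.1| := abs_add_le _ _
      _ = a * |p.1| + b * |q.1| := by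
          rw [abs_mul, abs_mul, abs_of_nonneg ha, abs_of_nonneg hb]
  have h2 : |(a • p + b • q).2| ≤ a * |p.2| + b * |q.2| := by
    simp only [Prod.snd_add, Prod.smul_snd, smul_eq_mul]
    calc |a * p.2 + b * q.2| ≤ |a * p.2| + |b * q.2| := abs_add_le _ _
      _ = a * |p.2| + b * |q.2| := by
          rw [abs_mul, abs_mul, abs_of_nonneg ha, abs_of_nonneg hb]
  rcases eq_or_lt_of_le ha with h' | h'
  · have hb1 : b = 1 := by linarith
    rw [← h', hb1]
    simp only [zero_smul, one_smul, zero_add]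
    exact hq
  · nlinarith [h1, h2, mul_pos h' (sub_pos.2 hp), mul_nonneg hb (sub_nonneg.2 hq.le)]

lemma quad_neg {A B C u v : ℝ} (hA : A < 0) (hC : C < 0) (hdet : A * C - B ^ 2 > 0)
    (huv : ¬(u = 0 ∧ v = 0)) : (A * u + B * v) * u + (B * u + C * v) * v < 0 := by
  rcases eq_or_ne v 0 with hv | hv
  · subst hv
    have hu : u ≠ 0 := by tauto
    have : u ^ 2 > 0 := by positivity
    nlinarith
  · have hv2 : v ^ 2 > 0 := by positivity
    nlinarith [sq_nonneg (A * u + B * v), mul_pos hdet hv2]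

lemma ent_concave : StrictConcaveOn ℝ {p : ℝ × ℝ | |p.1| + |p.2| < 2}
    (fun p => ent p.1 p.2) := by
  set R : Set (ℝ × ℝ) := {p : ℝ × ℝ | |p.1| + |p.2| < 2} with hR
  refine ⟨region_convex, ?_⟩
  rintro p hp q hq hpq a b ha hb hab
  set γ : ℝ → ℝ × ℝ := fun r => p + r • (q - p) with hγdef
  have hγr : ∀ r ∈ Set.Icc (0:ℝ) 1, γ r ∈ R := by
    intro r hr
    have h2 := region_convex hp hq (by linarith [hr.2] : (0:ℝ) ≤ 1 - r) hr.1 (by ring)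
    have he : (1 - r) • p + r • q = γ r := by
      simp only [hγdef, smul_sub, sub_smul, one_smul]
      abel
    rwa [he] at h2
  have hγd : ∀ r : ℝ, HasDerivAt γ (q - p) r := by
    intro r
    exact (((hasDerivAt_id r).smul_const (q - p)).const_add p).congr_deriv (by simp)
  set u : ℝ := (q - p).1 with hu
  set v : ℝ := (q - p).2 with hv
  set φ : ℝ → ℝ := fun r => ent (γ r).1 (γ r).2 with hφ
  set g : ℝ → ℝ := fun r => E1 (γ r).1 (γ r).2 * u + E2 (γ r).1 (γ r).2 * v with hg
  have hder : ∀ r, γ r ∈ R → HasDerivAt φ (g r) r := by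
    intro r hr
    have hrR' : |(γ r).1| + |(γ r).2| < 2 := hr
    have h1 := (hasFDerivAt_entP hrR').comp_hasDerivAt r (hγd r)
    exact h1.congr_deriv (by simp [hu, hv, hg])
  have hder2 : ∀ r, γ r ∈ R → HasDerivAt g
      ((SSc (γ r).1 (γ r).2 * u + STc (γ r).1 (γ r).2 * v) * u
        + (STc (γ r).1 (γ r).2 * u + TTc (γ r).1 (γ r).2 * v) * v) r := by
    intro r hr
    have hrR' : |(γ r).1| + |(γ r).2| < 2 := hr
    have h1 := ((hasFDerivAt_E1P hrR').comp_hasDerivAt r (hγd r)).mul_const u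
    have h2 := ((hasFDerivAt_E2P hrR').comp_hasDerivAt r (hγd r)).mul_const v
    have h3 := h1.add h2
    exact h3.congr_deriv (by simp [hu, hv])
  have hopen : IsOpen {r : ℝ | γ r ∈ R} := by
    refine region_open.preimage ?_
    exact continuous_const.add (continuous_id.smul continuous_const)
  have hconc : StrictConcaveOn ℝ (Set.Icc (0:ℝ) 1) φ := by
    apply strictConcaveOn_of_deriv2_neg (convex_Icc 0 1)
    · intro r hr
      exact ((hder r (hγr r hr)).continuousAt).continuousWithinAt
    · intro r hr
      rw [interior_Icc] at hr
      have hrR : γ r ∈ R := hγr r ⟨hr.1.le, hr.2.le⟩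
      have hev : deriv φ =ᶠ[nhds r] g := by
        filter_upwards [hopen.mem_nhds hrR] with x hx
        exact (hder x hx).deriv
      have : deriv (deriv φ) r = deriv g r := hev.deriv_eq
      rw [Function.iterate_succ, Function.iterate_succ, Function.iterate_zero]
      simp only [Function.comp_apply, Function.id_def]
      rw [this, (hder2 r hrR).deriv]
      have huv : ¬(u = 0 ∧ v = 0) := by
        rintro ⟨h1, h2⟩
        apply hpq
        have : q - p = 0 := Prod.ext h1 h2
        have := sub_eq_zero.1 this
        exact this.symm
      have hrR' : |(γ r).1| + |(γ r).2| < 2 := hrR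
      exact quad_neg (SSc_neg hrR') (TTc_neg hrR') (det_pos hrR') huv
  have h0 : (0:ℝ) ∈ Set.Icc (0:ℝ) 1 := by norm_num
  have h1 : (1:ℝ) ∈ Set.Icc (0:ℝ) 1 := by norm_num
  have hne : (0:ℝ) ≠ 1 := by norm_num
  have hkey := hconc.2 h0 h1 hne ha hb hab
  have e0 : φ 0 = ent p.1 p.2 := by simp [hφ, hγdef]
  have e1 : φ 1 = ent q.1 q.2 := by simp [hφ, hγdef]
  have e2 : a • (0:ℝ) + b • (1:ℝ) = b := by simp
  have e3 : γ b = a • p + b • q := by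
    simp only [hγdef, smul_sub]
    have : a = 1 - b := by linarith
    rw [this]
    ext <;> simp <;> ring
  rw [e0, e1, e2] at hkey
  have e4 : φ b = ent (a • p + b • q).1 (a • p + b • q).2 := by
    show ent (γ b).1 (γ b).2 = _
    rw [e3]
  rw [e4] at hkey
  simpa using hkey

end concave

/-- Theorem `concavethm`:  on the open region `|s| + |t| < 2`, the Hessian of
`ent` is negative definite (`ent_ss < 0`, `ent_tt < 0`, and
`ent_ss·ent_tt - ent_st² > 0`); consequently `ent` is strictly concave there. -/
theorem ent_strictly_concave :
    (∀ s t : ℝ, |s| + |t| < 2 →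
      deriv (fun s' => deriv (fun s'' => ent s'' t) s') s < 0 ∧
      deriv (fun t' => deriv (fun t'' => ent s t'') t') t < 0 ∧
      deriv (fun s' => deriv (fun s'' => ent s'' t) s') s *
          deriv (fun t' => deriv (fun t'' => ent s t'') t') t -
        (deriv (fun s' => deriv (fun t' => ent s' t') t) s) ^ 2 > 0) ∧
    StrictConcaveOn ℝ {p : ℝ × ℝ | |p.1| + |p.2| < 2}
      (fun p => ent p.1 p.2) := by
  constructor
  · intro s t h
    rw [deriv2_ss h, deriv2_tt h, deriv2_st h]
    exact ⟨SSc_neg h, TTc_neg h, det_pos h⟩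
  · exact ent_concave
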